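/- Define q(x) = (1/4)(x₁−1)² + (1/4)·Σᵢ₌₁^{T−1}(xᵢ − xᵢ₊₁)² on ℝᵀ. Then q(x) = (1/2)·∇q(x)ᵀ(x − 𝟏), and for any indices 1 ≤ j₁ < j₂ ≤ T, q(x) ≥ max{(1/4)(x₁−1)², (x_{j₁} − x_{j₂})²/(4(j₂−j₁))}, where 𝟏 is the all-ones vector. -/

import Mathlib

open RealInnerProductSpace

noncomputable def chainQuadratic (T : ℕ) (hT : 0 < T)
    (x : EuclideanSpace ℝ (Fin T)) : ℝ :=
  (1/4) * (x ⟨0, hT⟩ - 1)^2 +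
    (1/4) * ∑ i : Fin (T - 1),
      (x (Fin.castLE (Nat.sub_le T 1) i) - x ⟨i.val + 1, Nat.add_lt_of_lt_sub i.isLt⟩)^2

/-- The all-ones vector in `EuclideanSpace ℝ (Fin T)`. -/
noncomputable def allOnes (T : ℕ) : EuclideanSpace ℝ (Fin T) :=
  (WithLp.equiv 2 (Fin T → ℝ)).symm (fun _ => 1)

section aux

variable {T : ℕ}

lemma chainAux_sq (ℓ : EuclideanSpace ℝ (Fin T) →L[ℝ] ℝ) (c : ℝ)
    (x : EuclideanSpace ℝ (Fin T)) :
    HasFDerivAt (fun y => (ℓ y - c)^2) ((2*(ℓ x - c)) • ℓ) x := by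
  have h := (ℓ.hasFDerivAt (x := x)).sub_const c
  have h2 := h.fun_mul h
  simp only [pow_two]
  refine h2.congr_fderiv ?_
  ext v
  simp only [ContinuousLinearMap.smul_apply, ContinuousLinearMap.add_apply, smul_eq_mul]
  ring

end aux

theorem chainQuadratic_properties (T : ℕ) (hT : 0 < T)
    (x : EuclideanSpace ℝ (Fin T)) :
    chainQuadratic T hT x =
      (1/2) * ⟪gradient (chainQuadratic T hT) x, x - allOnes T⟫ ∧
    ∀ j₁ j₂ : Fin T, j₁ < j₂ →
      chainQuadratic T hT x ≥
        max ((1/4) * (x ⟨0, hT⟩ - 1)^2)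
          ((x j₁ - x j₂)^2 / (4 * ((j₂ : ℝ) - (j₁ : ℝ)))) := by
  classical
  constructor
  · -- gradient identity
    let P : Fin T → (EuclideanSpace ℝ (Fin T) →L[ℝ] ℝ) := fun i => EuclideanSpace.proj i
    let a : Fin (T-1) → Fin T := fun i => Fin.castLE (Nat.sub_le T 1) i
    let b : Fin (T-1) → Fin T := fun i => ⟨i.val + 1, Nat.add_lt_of_lt_sub i.isLt⟩
    let L : EuclideanSpace ℝ (Fin T) →L[ℝ] ℝ :=
      (1/4 : ℝ) • ((2*(x ⟨0,hT⟩ - 1)) • P ⟨0,hT⟩) +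
      (1/4 : ℝ) • ∑ i : Fin (T-1), (2*(x (a i) - x (b i))) • (P (a i) - P (b i))
    have hL : HasFDerivAt (chainQuadratic T hT) L x := by
      have h0 : HasFDerivAt (fun y : EuclideanSpace ℝ (Fin T) =>
          (1/4 : ℝ) * (y ⟨0,hT⟩ - 1)^2)
          ((1/4 : ℝ) • ((2*(x ⟨0,hT⟩ - 1)) • P ⟨0,hT⟩)) x :=
        (chainAux_sq (P ⟨0,hT⟩) 1 x).const_mul (1/4)
      have h1 : HasFDerivAt (fun y : EuclideanSpace ℝ (Fin T) =>
          (1/4 : ℝ) * ∑ i : Fin (T-1), (y (a i) - y (b i))^2)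
          ((1/4 : ℝ) • ∑ i : Fin (T-1), (2*(x (a i) - x (b i))) • (P (a i) - P (b i))) x := by
        refine HasFDerivAt.const_mul ?_ (1/4)
        refine HasFDerivAt.fun_sum fun i _ => ?_
        have := chainAux_sq (P (a i) - P (b i)) 0 x
        simpa [P] using this
      exact h0.add h1
    have hg : gradient (chainQuadratic T hT) x = (InnerProductSpace.toDual ℝ _).symm L :=
      hL.hasGradientAt.gradient
    rw [hg, InnerProductSpace.toDual_symm_apply]
    have hsub : ∀ i : Fin T, (x - allOnes T) i = x i - 1 := by
      intro i
      simp [allOnes]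
    simp only [L, ContinuousLinearMap.add_apply, ContinuousLinearMap.smul_apply,
      ContinuousLinearMap.coe_sum', Finset.sum_apply, ContinuousLinearMap.sub_apply,
      smul_eq_mul, PiLp.proj_apply, P, hsub]
    rw [show (∑ i : Fin (T-1), 2*(x (a i) - x (b i)) * ((x (a i) - 1) - (x (b i) - 1)))
        = 2 * ∑ i : Fin (T-1), (x (a i) - x (b i))^2 from by
      rw [Finset.mul_sum]; exact Finset.sum_congr rfl fun i _ => by ring]
    show (1/4) * (x ⟨0,hT⟩ - 1)^2 + (1/4) * ∑ i : Fin (T-1), (x (a i) - x (b i))^2 = _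
    ring
  · -- inequalities
    intro j₁ j₂ hj
    set y : ℕ → ℝ := fun n => if h : n < T then x ⟨n, h⟩ else 0 with hy
    have hS : (∑ i : Fin (T-1),
        (x (Fin.castLE (Nat.sub_le T 1) i) - x ⟨i.val + 1, Nat.add_lt_of_lt_sub i.isLt⟩)^2)
        = ∑ i ∈ Finset.range (T-1), (y i - y (i+1))^2 := by
      rw [← Fin.sum_univ_eq_sum_range]
      refine Finset.sum_congr rfl fun i _ => ?_
      have h1 : (i : ℕ) < T := lt_of_lt_of_le i.isLt (Nat.sub_le T 1)
      have h2 : (i : ℕ) + 1 < T := Nat.add_lt_of_lt_sub i.isLt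
      simp [y, h1, h2, Fin.castLE]
    have hSnonneg : (0:ℝ) ≤ ∑ i ∈ Finset.range (T-1), (y i - y (i+1))^2 :=
      Finset.sum_nonneg fun i _ => sq_nonneg _
    have hkey : (y j₁ - y j₂)^2 ≤ ((j₂:ℕ) - (j₁:ℕ) : ℕ) *
        ∑ i ∈ Finset.range (T-1), (y i - y (i+1))^2 := by
      have htel : y j₁ - y j₂ = ∑ i ∈ Finset.range ((j₂:ℕ) - j₁), (y (j₁ + i) - y (j₁ + (i+1))) := by
        rw [Finset.sum_range_sub' (fun i => y ((j₁:ℕ) + i))]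
        rw [Nat.add_sub_cancel' (le_of_lt hj)]
        simp
      have hcs : (y j₁ - y j₂)^2 ≤ ((j₂:ℕ) - (j₁:ℕ) : ℕ) *
          ∑ i ∈ Finset.range ((j₂:ℕ) - j₁), (y (j₁ + i) - y (j₁ + (i+1)))^2 := by
        rw [htel]
        have := sq_sum_le_card_mul_sum_sq (s := Finset.range ((j₂:ℕ) - j₁))
          (f := fun i => y ((j₁:ℕ) + i) - y ((j₁:ℕ) + (i+1)))
        simpa using this
      refine hcs.trans ?_
      refine mul_le_mul_of_nonneg_left ?_ (by positivity)
      have hre : ∑ i ∈ Finset.range ((j₂:ℕ) - j₁), (y (j₁ + i) - y (j₁ + (i+1)))^2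
          = ∑ i ∈ Finset.Ico (j₁:ℕ) (j₂:ℕ), (y i - y (i+1))^2 := by
        rw [Finset.sum_Ico_eq_sum_range]
        refine Finset.sum_congr rfl fun i _ => by ring_nf
      rw [hre]
      refine Finset.sum_le_sum_of_subset_of_nonneg ?_ (fun i _ _ => sq_nonneg _)
      intro i hi
      simp only [Finset.mem_Ico] at hi
      simp only [Finset.mem_range]
      exact lt_of_lt_of_le hi.2 (Nat.le_sub_one_of_lt j₂.isLt)
    have hx1 : x j₁ = y j₁ := by simp [y, j₁.isLt]
    have hx2 : x j₂ = y j₂ := by simp [y, j₂.isLt]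
    have hjr : ((j₂:ℕ) - (j₁:ℕ) : ℕ) = ((j₂:ℝ) - (j₁:ℝ)) := by
      push_cast [Nat.cast_sub (le_of_lt hj)]
      ring
    have hjpos : (0:ℝ) < (j₂:ℝ) - (j₁:ℝ) := by
      have : (j₁:ℕ) < (j₂:ℕ) := hj
      have := Nat.cast_lt (α := ℝ) |>.mpr this
      linarith
    rw [ge_iff_le, max_le_iff]
    constructor
    · unfold chainQuadratic
      rw [hS]
      nlinarith [hSnonneg]
    · rw [div_le_iff₀ (by positivity)]
      unfold chainQuadratic
      rw [hS, hx1, hx2]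
      rw [hjr] at hkey
      nlinarith [hkey, hSnonneg, sq_nonneg (x ⟨0,hT⟩ - 1), hjpos]
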